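/- arXiv:1304.6111 — 3 statements merged into one kernel-verified Lean document; each statement's English description precedes it below -/
import Mathlib

section
/- Let G be a group and H, K subgroups of G. For elements a, b, c, d ∈ G, if aH ∩ Kb ≠ ∅, cH ∩ Kb ≠ ∅, and cH ∩ Kd ≠ ∅, then aH ∩ Kd ≠ ∅. -/
theorem coset_intersection_path_shortening {G : Type*} [Group G] (H K : Subgroup G)
    (a b c d : G)
    (hab : ({x : G | ∃ h ∈ H, x = a * h} ∩ {x : G | ∃ k ∈ K, x = k * b}).Nonempty)
    (hcb : ({x : G | ∃ h ∈ H, x = c * h} ∩ {x : G | ∃ k ∈ K, x = k * b}).Nonempty)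
    (hcd : ({x : G | ∃ h ∈ H, x = c * h} ∩ {x : G | ∃ k ∈ K, x = k * d}).Nonempty) :
    ({x : G | ∃ h ∈ H, x = a * h} ∩ {x : G | ∃ k ∈ K, x = k * d}).Nonempty := by
  obtain ⟨x, ⟨h1, hh1, hx1⟩, ⟨k1, hk1, hx2⟩⟩ := hab
  obtain ⟨y, ⟨h2, hh2, hy1⟩, ⟨k2, hk2, hy2⟩⟩ := hcb
  obtain ⟨z, ⟨h3, hh3, hz1⟩, ⟨k3, hk3, hz2⟩⟩ := hcd
  refine ⟨a * (h1 * h2⁻¹ * h3), ⟨h1 * h2⁻¹ * h3, by exact mul_mem (mul_mem hh1 (inv_mem hh2)) hh3, rfl⟩,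
    ⟨k1 * k2⁻¹ * k3, mul_mem (mul_mem hk1 (inv_mem hk2)) hk3, ?_⟩⟩
  have e1 : a * h1 = k1 * b := hx1 ▸ hx2
  have e2 : c * h2 = k2 * b := hy1 ▸ hy2
  have e3 : c * h3 = k3 * d := hz1 ▸ hz2
  have hb : b = k1⁻¹ * (a * h1) := by rw [e1]; group
  have hc : c = k2 * b * h2⁻¹ := by rw [← e2]; group
  have hd : d = k3⁻¹ * (c * h3) := by rw [e3]; group
  rw [hd, hc, hb]; group
end

section
/- Let G be a group and let H, K be subgroups of G of finite index with [G:H] ≤ [G:K]. Then there exists a set T ⊆ G that is a left transversal for H in G (contains exactly one element of each left coset of H) and such that distinct elements of T lie in distinct right cosets of K (so T can be extended to a right transversal for K in G). -/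
theorem exists_left_transversal_extendable_to_right {G : Type*} [Group G]
    (H K : Subgroup G) [H.FiniteIndex] [K.FiniteIndex]
    (hle : H.index ≤ K.index) :
    ∃ T : Set G,
      (∀ g : G, ∃! t : G, t ∈ T ∧ t⁻¹ * g ∈ H) ∧
      (∀ a ∈ T, ∀ b ∈ T, a * b⁻¹ ∈ K → a = b) := by
  classical
  -- Pass to the finite quotient by the normal core of H ⊓ K
  set N : Subgroup G := (H ⊓ K).normalCore with hNdef
  have hNle : N ≤ H ⊓ K := Subgroup.normalCore_le _
  have hNH : N ≤ H := hNle.trans inf_le_left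
  have hNK : N ≤ K := hNle.trans inf_le_right
  haveI : N.Normal := Subgroup.normalCore_normal _
  haveI : N.FiniteIndex := Subgroup.finiteIndex_normalCore _
  let Q := G ⧸ N
  haveI : Finite Q := inferInstanceAs (Finite (G ⧸ N))
  haveI : Fintype Q := Fintype.ofFinite Q
  let π : G →* Q := QuotientGroup.mk' N
  have hπsurj : Function.Surjective π := QuotientGroup.mk'_surjective N
  have hker : π.ker = N := QuotientGroup.ker_mk' N
  set H' : Subgroup Q := H.map π with hH'def
  set K' : Subgroup Q := K.map π with hK'def
  have hHcomap : H'.comap π = H := by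
    rw [hH'def, Subgroup.comap_map_eq, hker, sup_eq_left.mpr hNH]
  have hKcomap : K'.comap π = K := by
    rw [hK'def, Subgroup.comap_map_eq, hker, sup_eq_left.mpr hNK]
  have hHmem : ∀ g : G, π g ∈ H' ↔ g ∈ H := by
    intro g
    rw [← hHcomap]; rfl
  have hKmem : ∀ g : G, π g ∈ K' ↔ g ∈ K := by
    intro g
    rw [← hKcomap]; rfl
  have hrange : π.range = ⊤ := MonoidHom.range_eq_top_of_surjective π hπsurj
  have hHidx : H'.index = H.index := by
    rw [hH'def, Subgroup.index_map, hker, sup_eq_left.mpr hNH, hrange,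
      Subgroup.index_top, mul_one]
  have hKidx : K'.index = K.index := by
    rw [hK'def, Subgroup.index_map, hker, sup_eq_left.mpr hNK, hrange,
      Subgroup.index_top, mul_one]
  have hHidx0 : H'.index ≠ 0 := by rw [hHidx]; exact Subgroup.FiniteIndex.index_ne_zero
  -- card K' ≤ card H'
  have hcard : Nat.card K' ≤ Nat.card H' := by
    have h1 : Nat.card H' * H'.index = Nat.card Q := Subgroup.card_mul_index H'
    have h2 : Nat.card K' * K'.index = Nat.card Q := Subgroup.card_mul_index K'
    have hidxle : H'.index ≤ K'.index := by rw [hHidx, hKidx]; exact hle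
    have : Nat.card K' * H'.index ≤ Nat.card H' * H'.index := by
      calc Nat.card K' * H'.index ≤ Nat.card K' * K'.index :=
            Nat.mul_le_mul_left _ hidxle
        _ = Nat.card H' * H'.index := by rw [h1, h2]
    exact Nat.le_of_mul_le_mul_right this (Nat.pos_of_ne_zero hHidx0)
  have hcardH0 : Nat.card H' ≠ 0 := Nat.card_ne_zero.mpr ⟨⟨1, one_mem _⟩, inferInstance⟩
  -- Hall's marriage setup
  let A := Q ⧸ H'
  let B := Q ⧸ K'
  haveI : Fintype A := Fintype.ofFinite A
  haveI : Fintype B := Fintype.ofFinite B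
  let r : A → B → Prop := fun a b => ∃ x : Q, (QuotientGroup.mk x : A) = a ∧
    (QuotientGroup.mk x⁻¹ : B) = b
  -- Hall's condition
  have hall : ∀ S : Finset A, S.card ≤ Fintype.card (SetRel.image {p : A × B | r p.1 p.2} (S : Set A)) := by
    intro S
    set I : Set B := SetRel.image {p : A × B | r p.1 p.2} (S : Set A) with hIdef
    -- U = preimage of S in Q
    have hU : Nat.card (QuotientGroup.mk ⁻¹' (S : Set A) : Set Q) =
        Nat.card H' * S.card := by
      rw [Nat.card_congr (QuotientGroup.preimageMkEquivSubgroupProdSet H' (S : Set A)),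
        Nat.card_prod]
      congr 1
      simp [Nat.card_eq_fintype_card, Fintype.card_coe]
    have hV : Nat.card ((fun x : Q => x⁻¹) ⁻¹' (QuotientGroup.mk ⁻¹' I) : Set Q) =
        Nat.card K' * Nat.card I := by
      have e : ((fun x : Q => x⁻¹) ⁻¹' (QuotientGroup.mk ⁻¹' I) : Set Q) ≃
          (QuotientGroup.mk ⁻¹' I : Set Q) :=
        { toFun := fun x => ⟨x.1⁻¹, x.2⟩
          invFun := fun y => ⟨y.1⁻¹, by simp only [Set.mem_preimage, Q, inv_inv]; exact y.2⟩
          left_inv := fun x => by simp [Q]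
          right_inv := fun y => by simp [Q] }
      rw [Nat.card_congr e,
        Nat.card_congr (QuotientGroup.preimageMkEquivSubgroupProdSet K' I), Nat.card_prod]
    have hsub : (QuotientGroup.mk ⁻¹' (S : Set A) : Set Q) ⊆
        (fun x : Q => x⁻¹) ⁻¹' (QuotientGroup.mk ⁻¹' I) := by
      intro x hx
      exact ⟨(QuotientGroup.mk x : A), hx, x, rfl, rfl⟩
    have hle2 : Nat.card H' * S.card ≤ Nat.card K' * Nat.card I := by
      rw [← hU, ← hV]
      rw [Nat.card_coe_set_eq, Nat.card_coe_set_eq]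
      exact Set.ncard_le_ncard hsub (Set.toFinite _)
    have : Nat.card H' * S.card ≤ Nat.card H' * Nat.card I :=
      hle2.trans (Nat.mul_le_mul_right _ hcard)
    have hcardle : S.card ≤ Nat.card I :=
      Nat.le_of_mul_le_mul_left this (Nat.pos_of_ne_zero hcardH0)
    rwa [Nat.card_eq_fintype_card] at hcardle
  obtain ⟨f, hfinj, hfr⟩ :=
    (Fintype.all_card_le_rel_image_card_iff_exists_injective {p : A × B | r p.1 p.2}).mp
      (by intro S; convert hall S)
  -- transfer back to G
  let φ : G ⧸ H → A := fun a => Quotient.liftOn' a (fun g => (QuotientGroup.mk (π g) : A))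
    (by
      intro x y hxy
      rw [QuotientGroup.leftRel_apply] at hxy
      apply QuotientGroup.eq.mpr
      rw [← map_inv, ← map_mul]
      exact (hHmem _).mpr hxy)
  have hφmk : ∀ g : G, φ (QuotientGroup.mk g) = (QuotientGroup.mk (π g) : A) := fun g => rfl
  have hφinj : Function.Injective φ := by
    intro a b hab
    induction a using QuotientGroup.induction_on
    induction b using QuotientGroup.induction_on
    rename_i x y
    rw [hφmk, hφmk] at hab
    have := QuotientGroup.eq.mp hab
    rw [← map_inv, ← map_mul, hHmem] at this
    exact QuotientGroup.eq.mpr this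
  have key : ∀ a : G ⧸ H, ∃ g : G, (QuotientGroup.mk g : G ⧸ H) = a ∧
      (QuotientGroup.mk (π g)⁻¹ : B) = f (φ a) := by
    intro a
    obtain ⟨x, hx1, hx2⟩ := hfr (φ a)
    obtain ⟨g, rfl⟩ := hπsurj x
    refine ⟨g, ?_, hx2⟩
    apply hφinj
    rw [hφmk]
    exact hx1
  choose t ht1 ht2 using key
  refine ⟨Set.range t, ?_, ?_⟩
  · intro g
    refine ⟨t (QuotientGroup.mk g), ⟨⟨_, rfl⟩, ?_⟩, ?_⟩
    · exact QuotientGroup.eq.mp (ht1 (QuotientGroup.mk g))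
    · rintro u ⟨⟨a, rfl⟩, hu⟩
      have : (QuotientGroup.mk (t a) : G ⧸ H) = QuotientGroup.mk g :=
        QuotientGroup.eq.mpr hu
      rw [ht1 a] at this
      rw [this]
  · rintro _ ⟨a, rfl⟩ _ ⟨b, rfl⟩ hK
    have hK' : π (t a) * (π (t b))⁻¹ ∈ K' := by
      rw [← map_inv, ← map_mul]
      exact (hKmem _).mpr hK
    have hB : (QuotientGroup.mk (π (t a))⁻¹ : B) = QuotientGroup.mk (π (t b))⁻¹ := by
      apply QuotientGroup.eq.mpr
      rwa [inv_inv]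
    rw [ht2 a, ht2 b] at hB
    have := hφinj (hfinj hB)
    rw [← ht1 a, ← ht1 b, this]
end

section
/- Let G be a group and H a subgroup of G of finite index. Then there exists a set T ⊆ G that is simultaneously a left transversal and a right transversal for H in G (a left-right transversal). -/
open scoped Pointwise

private lemma finite_case_lrt {G : Type*} [Group G] [Finite G] (H : Subgroup G) :
    ∃ T : Set G,
      (∀ g : G, ∃! t : G, t ∈ T ∧ t⁻¹ * g ∈ H) ∧
      (∀ g : G, ∃! t : G, t ∈ T ∧ g * t⁻¹ ∈ H) := by
  classical
  cases nonempty_fintype G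
  set Q := G ⧸ H with hQ
  let t : Q → Finset Q := fun L => Finset.univ.filter
    (fun R => ∃ x : G, (QuotientGroup.mk x : Q) = L ∧ (QuotientGroup.mk x⁻¹ : Q) = R)
  have key : ∀ s : Finset Q,
      Nat.card ((QuotientGroup.mk : G → Q) ⁻¹' ↑s) = Nat.card H * s.card := by
    intro s
    rw [Nat.card_congr (QuotientGroup.preimageMkEquivSubgroupProdSet H ↑s), Nat.card_prod]
    congr 1
    rw [Nat.card_coe_set_eq, Set.ncard_coe_finset]
  have hall : ∀ s : Finset Q, s.card ≤ (s.biUnion t).card := by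
    intro S
    set A : Set G := (QuotientGroup.mk : G → Q) ⁻¹' ↑S with hA
    set B : Set G := (QuotientGroup.mk : G → Q) ⁻¹' ↑(S.biUnion t) with hB
    have hsub : A ⊆ B⁻¹ := by
      intro x hx
      simp only [hA, Set.mem_preimage, Finset.mem_coe] at hx
      simp only [Set.mem_inv, hB, Set.mem_preimage, Finset.mem_coe, Finset.mem_biUnion]
      refine ⟨QuotientGroup.mk x, hx, ?_⟩
      simp only [t, Finset.mem_filter, Finset.mem_univ, true_and]
      exact ⟨x, rfl, rfl⟩
    have hle : Nat.card A ≤ Nat.card B := by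
      calc Nat.card A ≤ Nat.card ↥(B⁻¹) := Nat.card_mono (Set.toFinite _) hsub
        _ = Nat.card B := by
            rw [Nat.card_coe_set_eq, Nat.card_coe_set_eq, Set.ncard_inv]
    rw [hA, hB, key, key] at hle
    exact Nat.le_of_mul_le_mul_left hle Nat.card_pos
  obtain ⟨f, hfinj, hf⟩ := (Finset.all_card_le_biUnion_card_iff_exists_injective t).mp hall
  have hfbij : Function.Bijective f := (Finite.injective_iff_bijective).mp hfinj
  have hx : ∀ L : Q, ∃ x : G, (QuotientGroup.mk x : Q) = L ∧ (QuotientGroup.mk x⁻¹ : Q) = f L := by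
    intro L
    have := hf L
    simpa [t] using this
  choose x hx1 hx2 using hx
  refine ⟨Set.range x, ?_, ?_⟩
  · intro g
    refine ⟨x (QuotientGroup.mk g), ⟨⟨_, rfl⟩, ?_⟩, ?_⟩
    · exact (QuotientGroup.eq).mp (hx1 (QuotientGroup.mk g))
    · rintro t' ⟨⟨L', rfl⟩, ht'⟩
      have : (QuotientGroup.mk (x L') : Q) = QuotientGroup.mk g := (QuotientGroup.eq).mpr ht'
      rw [hx1 L'] at this
      rw [this]
  · intro g
    obtain ⟨L₀, hL₀⟩ := hfbij.surjective (QuotientGroup.mk g⁻¹ : Q)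
    have hcond : ∀ t' : G, (g * t'⁻¹ ∈ H) ↔ ((QuotientGroup.mk t'⁻¹ : Q) = QuotientGroup.mk g⁻¹) := by
      intro t'
      rw [QuotientGroup.eq]
      constructor
      · intro h; simpa using H.inv_mem h
      · intro h; simpa using H.inv_mem h
    refine ⟨x L₀, ⟨⟨_, rfl⟩, ?_⟩, ?_⟩
    · rw [hcond, hx2, hL₀]
    · rintro t' ⟨⟨L', rfl⟩, ht'⟩
      rw [hcond, hx2] at ht'
      rw [hfinj (ht'.trans hL₀.symm)]

theorem exists_left_right_transversal_of_finiteIndex {G : Type*} [Group G]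
    (H : Subgroup G) [H.FiniteIndex] :
    ∃ T : Set G,
      (∀ g : G, ∃! t : G, t ∈ T ∧ t⁻¹ * g ∈ H) ∧
      (∀ g : G, ∃! t : G, t ∈ T ∧ g * t⁻¹ ∈ H) := by
  classical
  set N := H.normalCore with hN
  have hNle : N ≤ H := Subgroup.normalCore_le H
  let π : G →* G ⧸ N := QuotientGroup.mk' N
  have hmem : ∀ g : G, π g ∈ H.map π ↔ g ∈ H := by
    intro g
    constructor
    · rintro ⟨h, hh, heq⟩
      have : h⁻¹ * g ∈ N := by
        rw [← QuotientGroup.eq]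
        exact heq
      have := H.mul_mem hh (hNle this)
      simpa using this
    · intro hg; exact ⟨g, hg, rfl⟩
  obtain ⟨Tb, hl, hr⟩ := finite_case_lrt (H.map π)
  refine ⟨Quotient.out '' Tb, ?_, ?_⟩
  · intro g
    obtain ⟨tb, ⟨htbT, htbH⟩, huniq⟩ := hl (π g)
    have hout : π tb.out = tb := QuotientGroup.out_eq' tb
    refine ⟨tb.out, ⟨⟨tb, htbT, rfl⟩, ?_⟩, ?_⟩
    · rw [← hmem]
      simpa [map_mul, map_inv, hout] using htbH
    · rintro t' ⟨⟨sb, hsb, rfl⟩, ht'⟩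
      have hout' : π sb.out = sb := QuotientGroup.out_eq' sb
      have : sb = tb := by
        apply huniq
        refine ⟨hsb, ?_⟩
        rw [← hout', ← map_inv, ← map_mul]
        exact (hmem _).mpr ht'
      rw [this]
  · intro g
    obtain ⟨tb, ⟨htbT, htbH⟩, huniq⟩ := hr (π g)
    have hout : π tb.out = tb := QuotientGroup.out_eq' tb
    refine ⟨tb.out, ⟨⟨tb, htbT, rfl⟩, ?_⟩, ?_⟩
    · rw [← hmem]
      simpa [map_mul, map_inv, hout] using htbH
    · rintro t' ⟨⟨sb, hsb, rfl⟩, ht'⟩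
      have hout' : π sb.out = sb := QuotientGroup.out_eq' sb
      have : sb = tb := by
        apply huniq
        refine ⟨hsb, ?_⟩
        rw [← hout', ← map_inv, ← map_mul]
        exact (hmem _).mpr ht'
      rw [this]
end
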